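/- Let k, l be nonzero real numbers with 2|k| < |k-l|, and let s₁, s₂, s₃ ≥ 0 with s := s₁ + s₂. Then 1 ≤ ⟨1/(k-l)⟩^s |k-l|^s ≤ C ⟨1/l⟩^{s₃} ⟨1/(k-l)⟩^{s₃} (1 + ⟨1/k⟩^{s - 2s₃}) |k-l|^{s₁} |l|^{s₂}, where ⟨1/x⟩ := (1 + |x|^{-2})^{1/2} and C depends only on s₁, s₂, s₃. -/

import Mathlib

open Real

theorem stmt_3 (s₁ s₂ s₃ : ℝ) (hs₁ : 0 ≤ s₁) (hs₂ : 0 ≤ s₂) (hs₃ : 0 ≤ s₃) :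
    ∃ C : ℝ, 0 < C ∧
      ∀ k l : ℝ, k ≠ 0 → l ≠ 0 → 2 * |k| < |k - l| →
        (1 : ℝ) ≤ Real.sqrt (1 + (k - l)⁻¹ ^ 2) ^ (s₁ + s₂) * |k - l| ^ (s₁ + s₂) ∧
        Real.sqrt (1 + (k - l)⁻¹ ^ 2) ^ (s₁ + s₂) * |k - l| ^ (s₁ + s₂) ≤
          C * (Real.sqrt (1 + l⁻¹ ^ 2) ^ s₃ * Real.sqrt (1 + (k - l)⁻¹ ^ 2) ^ s₃ *
            (1 + Real.sqrt (1 + k⁻¹ ^ 2) ^ (s₁ + s₂ - 2 * s₃)) *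
            |k - l| ^ s₁ * |l| ^ s₂) := by
  refine ⟨(3/2 : ℝ) ^ s₃ * 2 ^ s₂, by positivity, ?_⟩
  intro k l hk hl hkl
  set d := k - l with hd
  clear_value d
  have hdne : d ≠ 0 := by
    intro h
    rw [h, abs_zero] at hkl
    have := abs_pos.2 hk
    linarith
  have hdpos : 0 < |d| := abs_pos.2 hdne
  have hlpos : 0 < |l| := abs_pos.2 hl
  have hkpos : 0 < |k| := abs_pos.2 hk
  have hB1 : (1:ℝ) ≤ Real.sqrt (1 + d⁻¹ ^ 2) := by
    have := Real.sqrt_le_sqrt (show (1:ℝ) ≤ 1 + d⁻¹ ^ 2 by nlinarith [sq_nonneg d⁻¹])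
    simpa using this
  have hB0 : 0 < Real.sqrt (1 + d⁻¹ ^ 2) := lt_of_lt_of_le one_pos hB1
  set B := Real.sqrt (1 + d⁻¹ ^ 2) with hBdef
  set K := Real.sqrt (1 + k⁻¹ ^ 2) with hKdef
  set L := Real.sqrt (1 + l⁻¹ ^ 2) with hLdef
  clear_value B K L
  have hK0 : 0 < K := by rw [hKdef]; exact Real.sqrt_pos.2 (by positivity)
  have hL0 : 0 < L := by rw [hLdef]; exact Real.sqrt_pos.2 (by positivity)
  -- product identity : B * |d| = sqrt (d^2 + 1)
  have hBd : B * |d| = Real.sqrt (d ^ 2 + 1) := by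
    rw [hBdef, ← Real.sqrt_sq_eq_abs, ← Real.sqrt_mul (by positivity)]
    congr 1
    field_simp
  -- first inequality
  have h1 : (1:ℝ) ≤ B ^ (s₁ + s₂) * |d| ^ (s₁ + s₂) := by
    rw [← Real.mul_rpow hB0.le hdpos.le, hBd]
    apply Real.one_le_rpow ?_ (by linarith)
    have := Real.sqrt_le_sqrt (show (1:ℝ) ≤ d ^ 2 + 1 by nlinarith [sq_nonneg d])
    simpa using this
  refine ⟨h1, ?_⟩
  -- size comparisons
  have hdl : |d| / 2 ≤ |l| := by
    have : |d| ≤ |k| + |l| := by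
      calc |d| = |k + (-l)| := by rw [hd]; ring_nf
      _ ≤ |k| + |(-l)| := abs_add_le _ _
      _ = |k| + |l| := by rw [abs_neg]
    linarith
  have hld : |l| ≤ 3/2 * |d| := by
    have : |l| ≤ |k| + |d| := by
      calc |l| = |k + (-d)| := by rw [hd]; ring_nf
      _ ≤ |k| + |(-d)| := abs_add_le _ _
      _ = |k| + |d| := by rw [abs_neg]
    linarith
  have hkd : |k| ≤ |d| := by linarith
  -- B ≤ K
  have hBK : B ≤ K := by
    rw [hBdef, hKdef]
    apply Real.sqrt_le_sqrt
    have hk2 : k ^ 2 ≤ d ^ 2 := by nlinarith [sq_abs k, sq_abs d, abs_nonneg k]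
    have : d⁻¹ ^ 2 ≤ k⁻¹ ^ 2 := by
      rw [inv_pow, inv_pow]
      exact inv_anti₀ (by positivity) hk2
    linarith
  -- (2/3) * B ≤ L
  have hBL : 2/3 * B ≤ L := by
    have h23 : (2/3 : ℝ) = Real.sqrt (4/9) := by
      rw [show (4/9 : ℝ) = (2/3)^2 by norm_num, Real.sqrt_sq (by norm_num)]
    rw [hBdef, hLdef, h23, ← Real.sqrt_mul (by norm_num)]
    apply Real.sqrt_le_sqrt
    have hl2 : l ^ 2 ≤ 9/4 * d ^ 2 := by
      nlinarith [sq_abs l, sq_abs d,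
        mul_le_mul hld hld (abs_nonneg l) (by positivity : (0:ℝ) ≤ 3/2 * |d|)]
    have h1' : ((9/4 : ℝ) * d ^ 2)⁻¹ ≤ (l ^ 2)⁻¹ :=
      inv_anti₀ (by positivity) hl2
    have h2' : ((9/4 : ℝ) * d ^ 2)⁻¹ = 4/9 * (d ^ 2)⁻¹ := by
      rw [mul_inv]; norm_num
    rw [h2'] at h1'
    rw [inv_pow, inv_pow]
    have hdinv : 0 ≤ (d ^ 2)⁻¹ := by positivity
    linarith
  -- middle factor bound
  have hBmid : B ^ (s₁ + s₂ - 2 * s₃) ≤ 1 + K ^ (s₁ + s₂ - 2 * s₃) := by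
    rcases le_or_gt (s₁ + s₂ - 2 * s₃) 0 with h | h
    · have : B ^ (s₁ + s₂ - 2 * s₃) ≤ 1 := Real.rpow_le_one_of_one_le_of_nonpos hB1 h
      have hKpow : 0 ≤ K ^ (s₁ + s₂ - 2 * s₃) := Real.rpow_nonneg hK0.le _
      linarith
    · have : B ^ (s₁ + s₂ - 2 * s₃) ≤ K ^ (s₁ + s₂ - 2 * s₃) :=
        Real.rpow_le_rpow hB0.le hBK h.le
      linarith
  -- rewriting of LHS
  have h2 : (0:ℝ) < (2:ℝ) ^ s₂ := Real.rpow_pos_of_pos (by norm_num) _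
  have e2 : (3/2 : ℝ) ^ s₃ * (2/3 : ℝ) ^ s₃ = 1 := by
    rw [← Real.mul_rpow (by norm_num) (by norm_num)]
    norm_num
  have eB : B ^ s₃ * B ^ s₃ * B ^ (s₁ + s₂ - 2 * s₃) = B ^ (s₁ + s₂) := by
    rw [← Real.rpow_add hB0, ← Real.rpow_add hB0]
    congr 1
    ring
  have eD : |d| ^ s₁ * |d| ^ s₂ = |d| ^ (s₁ + s₂) := (Real.rpow_add hdpos s₁ s₂).symm
  have key : B ^ (s₁ + s₂) * |d| ^ (s₁ + s₂) =
      ((3/2 : ℝ) ^ s₃ * 2 ^ s₂) * ((2/3 * B) ^ s₃ * B ^ s₃ * B ^ (s₁ + s₂ - 2 * s₃) *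
        |d| ^ s₁ * (|d| / 2) ^ s₂) := by
    rw [Real.mul_rpow (by norm_num) hB0.le, Real.div_rpow hdpos.le (by norm_num)]
    rw [← eB, ← eD]
    field_simp
    linear_combination -e2
  rw [key]
  gcongr
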